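/- Let q, r be positive integers, write ℓ for the part of gcd(q,r) built from primes appearing to equal exponent in q and r, and n for ∏_{u_p ≠ v_p} p^{max(u_p, v_p)} as above. For an integer c, the number f(c) of pairs (a,b) with a ∈ (ℤ/q)^×, b ∈ (ℤ/r)^×, and a·(r/gcd(q,r)) − b·(q/gcd(q,r)) ≡ c (mod lcm(q,r)) satisfies: f(c) = 0 unless gcd(c, n) = 1, and in that case f(c) = φ(m) · ℓ · ∏_{p ∣ gcd(ℓ,c)} (1 − 1/p) · ∏_{p ∣ ℓ, p ∤ c} (1 − 2/p), where m = ∏_{u_p ≠ v_p} p^{min(u_p,v_p)}. -/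

import Mathlib

open Finset

/-- The part of `q` built from primes occurring to equal exponent in `q` and `r`. -/
def equalPart (q r : ℕ) : ℕ :=
  ∏ p ∈ q.primeFactors, if q.factorization p = r.factorization p
    then p ^ q.factorization p else 1

/-- `∏_{u_p ≠ v_p} p ^ min (u_p, v_p)`. -/
def minPart (q r : ℕ) : ℕ :=
  ∏ p ∈ q.primeFactors ∪ r.primeFactors, if q.factorization p ≠ r.factorization p
    then p ^ min (q.factorization p) (r.factorization p) else 1

/-- `∏_{u_p ≠ v_p} p ^ max (u_p, v_p)`. -/
def maxPart (q r : ℕ) : ℕ :=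
  ∏ p ∈ q.primeFactors ∪ r.primeFactors, if q.factorization p ≠ r.factorization p
    then p ^ max (q.factorization p) (r.factorization p) else 1

def Ncnt (q r L : ℕ) (s t c : ℤ) : ℕ :=
  (((Finset.range q) ×ˢ (Finset.range r)).filter (fun ab : ℕ × ℕ =>
    Nat.Coprime ab.1 q ∧ Nat.Coprime ab.2 r ∧
    ((ab.1 : ℤ) * s * ((L / q : ℕ) : ℤ) - (ab.2 : ℤ) * t * ((L / r : ℕ) : ℤ))
      ≡ c [ZMOD L])).card

def locN (p u v : ℕ) (c : ℤ) : ℕ :=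
  if u = v then (if (p : ℤ) ∣ c then p ^ (u - 1) * (p - 1) else p ^ (u - 1) * (p - 2))
  else if (p : ℤ) ∣ c then 0 else Nat.totient (p ^ min u v)

lemma coprime_mod_iff (a n : ℕ) : Nat.Coprime (a % n) n ↔ Nat.Coprime a n := by
  rw [Nat.Coprime, Nat.Coprime, ← Nat.gcd_rec n a, Nat.gcd_comm n a]

lemma modeq_mod_mul_div {q L : ℕ} (hqL : q ∣ L) (a : ℕ) :
    ((a % q : ℕ) : ℤ) * ((L / q : ℕ) : ℤ) ≡ (a : ℤ) * ((L / q : ℕ) : ℤ) [ZMOD (L : ℕ)] := by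
  have h2 : (a : ℤ) = ((q : ℕ) : ℤ) * ((a / q : ℕ) : ℤ) + ((a % q : ℕ) : ℤ) := by
    exact_mod_cast congrArg (Nat.cast (R := ℤ)) (Nat.div_add_mod a q).symm
  rw [Int.ModEq]
  conv_rhs => rw [h2]
  rw [add_mul, show ((q:ℕ):ℤ) * ((a / q : ℕ):ℤ) * ((L/q :ℕ):ℤ)
      = ((a/q : ℕ):ℤ) * ((L:ℕ):ℤ) from by
    rw [show ((L:ℕ):ℤ) = (((q * (L/q) : ℕ)):ℤ) from by rw [Nat.mul_div_cancel' hqL]]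
    push_cast; ring]
  rw [add_comm, Int.add_mul_emod_self_right]

lemma card_range_mul_filter {n : ℕ} (m : ℕ) (P : ℕ → Prop) [DecidablePred P]
    (hP : ∀ k, P k ↔ P (k % n)) :
    ((range (m * n)).filter P).card = m * ((range n).filter P).card := by
  induction m with
  | zero => simp
  | succ m ih =>
    rw [add_mul, one_mul, Finset.range_add, filter_union, card_union_of_disjoint, ih,
      filter_map, card_map, add_mul, one_mul]
    · congr 1
      apply congrArg
      apply Finset.filter_congr
      intro j _
      simp only [Function.comp_apply, addLeftEmbedding_apply]
      rw [hP (m * n + j), show m * n + j = j + n * m by ring, Nat.add_mul_mod_self_left, ← hP j]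
    · rw [Finset.disjoint_left]
      intro x hx hx'
      simp only [mem_filter, mem_range] at hx
      simp only [mem_filter, mem_map, mem_range, addLeftEmbedding_apply] at hx'
      obtain ⟨⟨j, _, hj⟩, _⟩ := hx'
      omega

lemma card_range_prime_filter {p : ℕ} (hp : p.Prime) (c : ℤ) :
    ((range p).filter (fun k : ℕ => ¬ (p:ℤ) ∣ (k:ℤ) ∧ ¬ (p:ℤ) ∣ (c + (k:ℤ)))).card
      = if (p:ℤ) ∣ c then p - 1 else p - 2 := by
  have hp0 : (0:ℕ) < p := hp.pos
  have hppos : (0:ℤ) < (p:ℤ) := by exact_mod_cast hp0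
  set k₀ : ℕ := ((-c) % (p:ℤ)).toNat with hk₀def
  have hk₀ : (k₀ : ℤ) = (-c) % (p:ℤ) := Int.toNat_of_nonneg (Int.emod_nonneg _ hppos.ne')
  have hk₀lt : k₀ < p := by
    have := Int.emod_lt_of_pos (-c) hppos
    omega
  have hdvd : ∀ k : ℕ, k < p → ((p:ℤ) ∣ (c + (k:ℤ)) ↔ k = k₀) := by
    intro k hk
    have h3 : (k : ℤ) % p = (k : ℤ) :=
      Int.emod_eq_of_lt (by positivity) (by exact_mod_cast hk)
    constructor
    · rintro ⟨m, hm⟩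
      have h4 : (-c) % (p:ℤ) = (k:ℤ) % p := by
        rw [show -c = (k:ℤ) - (c + (k:ℤ)) by ring, hm,
          show (k:ℤ) - (p:ℤ) * m = (k:ℤ) + (p:ℤ) * (-m) by ring, Int.add_mul_emod_self_left]
      omega
    · rintro rfl
      have h5 := Int.emod_add_mul_ediv (-c) (p:ℤ)
      exact ⟨-((-c)/p), by rw [hk₀]; linarith⟩
  have hdvd0 : ∀ k : ℕ, k < p → ((p:ℤ) ∣ (k:ℤ) ↔ k = 0) := by
    intro k hk
    rw [Int.natCast_dvd_natCast]
    exact ⟨fun h => Nat.eq_zero_of_dvd_of_lt h hk, fun h => h ▸ dvd_zero p⟩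
  have hk00 : ((p:ℤ) ∣ c) ↔ k₀ = 0 := by
    constructor
    · intro h
      have h2 : ((-c) % (p:ℤ)) = 0 := Int.emod_eq_zero_of_dvd (dvd_neg.2 h)
      omega
    · intro h
      have h2 : ((-c) % (p:ℤ)) = 0 := by omega
      exact dvd_neg.1 (Int.dvd_of_emod_eq_zero h2)
  have hsplit : (range p).filter (fun k : ℕ => ¬ (p:ℤ) ∣ (k:ℤ) ∧ ¬ (p:ℤ) ∣ (c + (k:ℤ)))
      = range p \ {0, k₀} := by
    ext k
    simp only [mem_filter, mem_range, mem_sdiff, mem_insert, mem_singleton]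
    constructor
    · rintro ⟨hk, h1, h2⟩
      refine ⟨hk, ?_⟩
      push_neg
      exact ⟨fun h => h1 ((hdvd0 k hk).2 h), fun h => h2 ((hdvd k hk).2 h)⟩
    · rintro ⟨hk, h⟩
      push_neg at h
      exact ⟨hk, fun hd => h.1 ((hdvd0 k hk).1 hd), fun hd => h.2 ((hdvd k hk).1 hd)⟩
  rw [hsplit, card_sdiff_of_subset]
  · rw [card_range]
    by_cases hc : (p:ℤ) ∣ c
    · have : k₀ = 0 := hk00.1 hc
      rw [if_pos hc, this]
      simp
    · have hne : k₀ ≠ 0 := fun h => hc (hk00.2 h)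
      rw [if_neg hc, show ({0, k₀} : Finset ℕ).card = 2 from Finset.card_pair (Ne.symm hne)]
  · intro x hx
    simp only [mem_insert, mem_singleton] at hx
    rcases hx with rfl | rfl
    · exact mem_range.2 hp0
    · exact mem_range.2 hk₀lt

lemma int_dvd_iff_of_modeq {m n a b : ℤ} (h : a ≡ b [ZMOD n]) (hm : m ∣ n) :
    m ∣ a ↔ m ∣ b := by
  have hd : m ∣ b - a := dvd_trans hm h.dvd
  constructor
  · intro ha; simpa using dvd_add hd ha
  · intro hb; simpa using dvd_sub hb hd

lemma coprime_pp_iff {p u : ℕ} (hp : p.Prime) (hu : u ≠ 0) (k : ℕ) :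
    Nat.Coprime k (p^u) ↔ ¬ (p:ℤ) ∣ (k:ℤ) := by
  rw [Nat.coprime_pow_right_iff (Nat.pos_of_ne_zero hu), Nat.coprime_comm,
    hp.coprime_iff_not_dvd, Int.natCast_dvd_natCast]

lemma not_dvd_of_isCoprime {p u : ℕ} {s : ℤ} (hp : p.Prime) (hu : u ≠ 0)
    (hs : IsCoprime s ((p^u : ℕ) : ℤ)) : ¬ (p:ℤ) ∣ s := by
  intro h
  obtain ⟨d, e, hde⟩ := hs
  have hpn : (p:ℤ) ∣ ((p^u : ℕ) : ℤ) := by push_cast; exact dvd_pow_self _ hu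
  exact (Nat.prime_iff_prime_int.mp hp).not_dvd_one
    (hde ▸ dvd_add ((h.mul_left d)) (hpn.mul_left e))

lemma nat_eq_of_modeq {n a b : ℕ} (ha : a < n) (hb : b < n)
    (h : (a:ℤ) ≡ (b:ℤ) [ZMOD (n:ℕ)]) : a = b := by
  have hd := h.dvd
  have := Int.eq_zero_of_abs_lt_dvd hd (by rw [abs_lt]; push_cast; omega)
  omega

lemma modeq_cancel {n : ℕ} {s a b : ℤ} (hs : IsCoprime s ((n:ℕ):ℤ))
    (h : a * s ≡ b * s [ZMOD (n:ℕ)]) : a ≡ b [ZMOD (n:ℕ)] := by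
  obtain ⟨d, e, hde⟩ := hs
  have h2 : ((n:ℕ):ℤ) ∣ (b - a) * s := by
    have := h.dvd; rwa [← sub_mul] at this
  have h3 : ((n:ℕ):ℤ) ∣ (b - a) := by
    have heq : (b - a) = d * ((b - a) * s) + (b - a) * e * ((n:ℕ):ℤ) := by
      linear_combination (b - a) * hde.symm
    rw [heq]
    exact dvd_add (h2.mul_left d) (Dvd.intro_left _ rfl)
  exact Int.modEq_iff_dvd.mpr h3

lemma modeq_sub_iff {n : ℕ} {c X y : ℤ} :
    (X - y ≡ c [ZMOD (n:ℕ)]) ↔ (X ≡ c + y [ZMOD (n:ℕ)]) := by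
  constructor
  · intro h; have := h.add_right y; simpa using this
  · intro h; have := h.sub_right y; simpa using this

lemma Ncnt_pp_eq {p u : ℕ} (hp : p.Prime) (hu : u ≠ 0) (s t c : ℤ)
    (hs : IsCoprime s ((p^u : ℕ) : ℤ)) (ht : IsCoprime t ((p^u : ℕ) : ℤ)) :
    Ncnt (p^u) (p^u) (p^u) s t c = locN p u u c := by
  have hpi : Prime (p:ℤ) := Nat.prime_iff_prime_int.mp hp
  have hn0 : p^u ≠ 0 := pow_ne_zero _ hp.pos.ne'
  have hpn : (p:ℤ) ∣ ((p^u:ℕ):ℤ) := by push_cast; exact dvd_pow_self _ hu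
  have hps : ¬ (p:ℤ) ∣ s := not_dvd_of_isCoprime hp hu hs
  have hpt : ¬ (p:ℤ) ∣ t := not_dvd_of_isCoprime hp hu ht
  obtain ⟨d, e, hde⟩ := id hs
  obtain ⟨f, g0, hfg⟩ := id ht
  have hpf : ¬ (p:ℤ) ∣ f := by
    intro h
    exact hpi.not_dvd_one (hfg ▸ dvd_add (h.mul_right t) (hpn.mul_left g0))
  set n := p^u with hn
  have hnpos : (0:ℤ) < ((n:ℕ):ℤ) := by exact_mod_cast Nat.pos_of_ne_zero hn0
  set G : ℕ → ℕ := fun b => ((d * (c + (b:ℤ) * t)) % ((n:ℕ):ℤ)).toNat with hG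
  have f1 : ∀ b : ℕ, ((G b : ℕ) : ℤ) = (d * (c + (b:ℤ) * t)) % ((n:ℕ):ℤ) :=
    fun b => Int.toNat_of_nonneg (Int.emod_nonneg _ hnpos.ne')
  have f2 : ∀ b : ℕ, G b < n := by
    intro b
    have h1 := Int.emod_lt_of_pos (d * (c + (b:ℤ)*t)) hnpos
    have h2 := f1 b
    omega
  have f3 : ∀ b : ℕ, ((G b : ℕ):ℤ) * s ≡ c + (b:ℤ) * t [ZMOD (n:ℕ)] := by
    intro b
    apply Int.modEq_iff_dvd.mpr
    have hGb : ((G b:ℕ):ℤ) = d * (c + (b:ℤ)*t) - ((n:ℕ):ℤ) * ((d * (c + (b:ℤ)*t))/((n:ℕ):ℤ)) := by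
      rw [f1]; exact Int.emod_def _ _
    refine ⟨(c + (b:ℤ)*t)*e + ((d * (c + (b:ℤ)*t))/((n:ℕ):ℤ))*s, ?_⟩
    rw [hGb]
    linear_combination (c + (b:ℤ)*t) * hde.symm
  have key2 : ∀ b : ℕ, ((p:ℤ) ∣ (f*c + (b:ℤ)) ↔ (p:ℤ) ∣ (c + (b:ℤ)*t)) := by
    intro b
    have hnp : ((n:ℕ):ℤ) = (p:ℤ) * (p:ℤ)^(u-1) := by
      rw [hn]
      push_cast
      rw [← pow_succ', Nat.sub_add_cancel (Nat.one_le_iff_ne_zero.mpr hu)]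
    have h2 : (f*c + (b:ℤ)) ≡ f*(c + (b:ℤ)*t) [ZMOD (p:ℤ)] := by
      apply Int.modEq_iff_dvd.mpr
      refine ⟨-((b:ℤ) * g0 * (p:ℤ)^(u-1)), ?_⟩
      linear_combination (b:ℤ)*hfg - (b:ℤ)*g0*hnp
    rw [int_dvd_iff_of_modeq h2 dvd_rfl, hpi.dvd_mul]
    tauto
  have key3 : ∀ (a b : ℕ), ((a:ℤ) * s ≡ c + (b:ℤ)*t [ZMOD (n:ℕ)]) →
      ((p:ℤ) ∣ (a:ℤ) ↔ (p:ℤ) ∣ (c + (b:ℤ)*t)) := by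
    intro a b heq
    rw [← int_dvd_iff_of_modeq heq hpn, hpi.dvd_mul]
    tauto
  have huniq : ∀ a b : ℕ, a < n → ((a:ℤ) * s ≡ c + (b:ℤ)*t [ZMOD (n:ℕ)]) → a = G b := by
    intro a b ha heq
    exact nat_eq_of_modeq ha (f2 b) (modeq_cancel hs (heq.trans (f3 b).symm))
  rw [locN, if_pos rfl, Ncnt]
  have hdiv : (n / n : ℕ) = 1 := Nat.div_self (Nat.pos_of_ne_zero hn0)
  simp only [hdiv, Nat.cast_one, mul_one]
  refine (Finset.card_nbij'
      (t := (range n).filter (fun b : ℕ => ¬ (p:ℤ) ∣ ((b:ℕ):ℤ) ∧ ¬ (p:ℤ) ∣ (f*c + ((b:ℕ):ℤ))))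
      (fun ab => ab.2) (fun b => (G b, b)) ?_ ?_ ?_ ?_).trans ?_
  · rintro ⟨a, b⟩ hab
    simp only [Finset.mem_coe, mem_filter, mem_product, mem_range] at hab
    obtain ⟨⟨ha, hb⟩, copa, copb, heq⟩ := hab
    have heq' := modeq_sub_iff.mp heq
    simp only [Finset.mem_coe, mem_filter, mem_range]
    refine ⟨hb, (coprime_pp_iff hp hu b).mp copb, fun hdv => ?_⟩
    exact (coprime_pp_iff hp hu a).mp copa ((key3 a b heq').mpr ((key2 b).mp hdv))
  · intro b hb
    simp only [Finset.mem_coe, mem_filter, mem_range] at hb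
    obtain ⟨hb1, hb2, hb3⟩ := hb
    simp only [Finset.mem_coe, mem_filter, mem_product, mem_range]
    refine ⟨⟨f2 b, hb1⟩, ?_, (coprime_pp_iff hp hu b).mpr hb2, modeq_sub_iff.mpr (f3 b)⟩
    exact (coprime_pp_iff hp hu (G b)).mpr (fun hdv =>
      ((key2 b).mpr ((key3 (G b) b (f3 b)).mp hdv)) |> hb3)
  · rintro ⟨a, b⟩ hab
    simp only [Finset.mem_coe, mem_filter, mem_product, mem_range] at hab
    obtain ⟨⟨ha, hb⟩, copa, copb, heq⟩ := hab
    have := huniq a b ha (modeq_sub_iff.mp heq)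
    simp [this.symm]
  · intro b _; rfl
  · have hper : ∀ k : ℕ, (¬ (p:ℤ) ∣ ((k:ℕ):ℤ) ∧ ¬ (p:ℤ) ∣ (f*c + ((k:ℕ):ℤ)))
        ↔ (¬ (p:ℤ) ∣ ((k % p : ℕ):ℤ) ∧ ¬ (p:ℤ) ∣ (f*c + ((k % p : ℕ):ℤ))) := by
      intro k
      have hcast : ((k % p : ℕ):ℤ) = (k:ℤ) % (p:ℤ) := by push_cast; ring
      have hmq : ((k:ℕ):ℤ) ≡ ((k % p : ℕ):ℤ) [ZMOD (p:ℤ)] := by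
        rw [hcast, Int.ModEq, Int.emod_emod_of_dvd _ dvd_rfl]
      rw [int_dvd_iff_of_modeq hmq dvd_rfl,
        int_dvd_iff_of_modeq ((Int.ModEq.refl (f*c)).add hmq) dvd_rfl]
    rw [show n = p^(u-1) * p from by
      rw [← pow_succ, Nat.sub_add_cancel (Nat.one_le_iff_ne_zero.mpr hu)]]
    rw [card_range_mul_filter _ _ hper, card_range_prime_filter hp (f*c)]
    have hiff : ((p:ℤ) ∣ f*c) ↔ ((p:ℤ) ∣ c) := by rw [hpi.dvd_mul]; tauto
    rw [if_congr hiff rfl rfl]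
    split_ifs <;> rfl

lemma modeq_sub_iff' {n : ℕ} {c X y : ℤ} :
    (X - y ≡ c [ZMOD (n:ℕ)]) ↔ (y ≡ X - c [ZMOD (n:ℕ)]) := by
  rw [Int.modEq_iff_dvd, Int.modEq_iff_dvd]
  constructor
  · intro h; rw [show (X - c) - y = -(c - (X - y)) by ring]; exact dvd_neg.mpr h
  · intro h; rw [show c - (X - y) = -((X - c) - y) by ring]; exact dvd_neg.mpr h

lemma Ncnt_pp_lt {p u v : ℕ} (hp : p.Prime) (hvu : v < u) (s t c : ℤ)
    (hs : IsCoprime s ((p^u : ℕ) : ℤ)) (ht : IsCoprime t ((p^u : ℕ) : ℤ)) :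
    Ncnt (p^u) (p^v) (p^u) s t c = locN p u v c := by
  have hu : u ≠ 0 := by omega
  have hpi : Prime (p:ℤ) := Nat.prime_iff_prime_int.mp hp
  have hn0 : p^u ≠ 0 := pow_ne_zero _ hp.pos.ne'
  have hpn : (p:ℤ) ∣ ((p^u:ℕ):ℤ) := by push_cast; exact dvd_pow_self _ hu
  have hps : ¬ (p:ℤ) ∣ s := not_dvd_of_isCoprime hp hu hs
  have hpt : ¬ (p:ℤ) ∣ t := not_dvd_of_isCoprime hp hu ht
  set n := p^u with hn
  have hnpos : (0:ℤ) < ((n:ℕ):ℤ) := by exact_mod_cast Nat.pos_of_ne_zero hn0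
  have hdivq : (n / n : ℕ) = 1 := Nat.div_self (Nat.pos_of_ne_zero hn0)
  have hdivr : (n / p^v : ℕ) = p^(u-v) := Nat.pow_div hvu.le hp.pos
  set P : ℤ := ((p^(u-v) : ℕ):ℤ) with hP
  have hpP : (p:ℤ) ∣ P := by rw [hP]; push_cast; exact dvd_pow_self _ (by omega)
  have key3 : ∀ (a b : ℕ), ((a:ℤ) * s ≡ c + (b:ℤ)*t*P [ZMOD (n:ℕ)]) →
      ((p:ℤ) ∣ (a:ℤ) ↔ (p:ℤ) ∣ c) := by
    intro a b heq
    have h1 : (c + (b:ℤ)*t*P) ≡ c [ZMOD (p:ℤ)] := by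
      apply Int.modEq_iff_dvd.mpr
      rw [show c - (c + (b:ℤ)*t*P) = -((b:ℤ)*t*P) by ring]
      exact dvd_neg.mpr (hpP.mul_left _)
    rw [← int_dvd_iff_of_modeq h1 dvd_rfl, ← int_dvd_iff_of_modeq heq hpn, hpi.dvd_mul]
    tauto
  rw [Ncnt, locN, if_neg (by omega : ¬ u = v)]
  simp only [hdivq, hdivr, Nat.cast_one, mul_one]
  by_cases hc : (p:ℤ) ∣ c
  · rw [if_pos hc, Finset.card_eq_zero.mpr]
    apply Finset.filter_eq_empty_iff.mpr
    rintro ⟨a, b⟩ hab hcond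
    obtain ⟨copa, copb, heq⟩ := hcond
    exact (coprime_pp_iff hp hu a).mp copa ((key3 a b (modeq_sub_iff.mp heq)).mpr hc)
  · rw [if_neg hc]
    obtain ⟨d, e, hde⟩ := id hs
    set G : ℕ → ℕ := fun b => ((d * (c + (b:ℤ) * t * P)) % ((n:ℕ):ℤ)).toNat with hG
    have f1 : ∀ b : ℕ, ((G b : ℕ) : ℤ) = (d * (c + (b:ℤ) * t * P)) % ((n:ℕ):ℤ) :=
      fun b => Int.toNat_of_nonneg (Int.emod_nonneg _ hnpos.ne')
    have f2 : ∀ b : ℕ, G b < n := by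
      intro b
      have h1 := Int.emod_lt_of_pos (d * (c + (b:ℤ)*t*P)) hnpos
      have h2 := f1 b
      omega
    have f3 : ∀ b : ℕ, ((G b : ℕ):ℤ) * s ≡ c + (b:ℤ) * t * P [ZMOD (n:ℕ)] := by
      intro b
      apply Int.modEq_iff_dvd.mpr
      have hGb : ((G b:ℕ):ℤ) = d * (c + (b:ℤ)*t*P)
          - ((n:ℕ):ℤ) * ((d * (c + (b:ℤ)*t*P))/((n:ℕ):ℤ)) := by
        rw [f1]; exact Int.emod_def _ _
      refine ⟨(c + (b:ℤ)*t*P)*e + ((d * (c + (b:ℤ)*t*P))/((n:ℕ):ℤ))*s, ?_⟩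
      rw [hGb]
      linear_combination (c + (b:ℤ)*t*P) * hde.symm
    have huniq : ∀ a b : ℕ, a < n → ((a:ℤ) * s ≡ c + (b:ℤ)*t*P [ZMOD (n:ℕ)]) → a = G b := by
      intro a b ha heq
      exact nat_eq_of_modeq ha (f2 b) (modeq_cancel hs (heq.trans (f3 b).symm))
    refine (Finset.card_nbij'
        (t := (range (p^v)).filter (fun b : ℕ => Nat.Coprime b (p^v)))
        (fun ab => ab.2) (fun b => (G b, b)) ?_ ?_ ?_ ?_).trans ?_
    · rintro ⟨a, b⟩ hab
      simp only [Finset.mem_coe, mem_filter, mem_product, mem_range] at hab ⊢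
      exact ⟨hab.1.2, hab.2.2.1⟩
    · intro b hb
      simp only [Finset.mem_coe, mem_filter, mem_range] at hb
      simp only [Finset.mem_coe, mem_filter, mem_product, mem_range]
      refine ⟨⟨f2 b, hb.1⟩, ?_, hb.2, modeq_sub_iff.mpr (f3 b)⟩
      exact (coprime_pp_iff hp hu (G b)).mpr
        (fun hdv => hc ((key3 (G b) b (f3 b)).mp hdv))
    · rintro ⟨a, b⟩ hab
      simp only [Finset.mem_coe, mem_filter, mem_product, mem_range] at hab
      have := huniq a b hab.1.1 (modeq_sub_iff.mp hab.2.2.2)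
      simp [this.symm]
    · intro b _; rfl
    · rw [show min u v = v from min_eq_right hvu.le, Nat.totient_eq_card_coprime]
      apply congrArg
      apply Finset.filter_congr
      intro b _
      exact ⟨fun h => Nat.coprime_comm.mp h, fun h => Nat.coprime_comm.mp h⟩

lemma Ncnt_pp_gt {p u v : ℕ} (hp : p.Prime) (huv : u < v) (s t c : ℤ)
    (hs : IsCoprime s ((p^v : ℕ) : ℤ)) (ht : IsCoprime t ((p^v : ℕ) : ℤ)) :
    Ncnt (p^u) (p^v) (p^v) s t c = locN p u v c := by
  have hv : v ≠ 0 := by omega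
  have hpi : Prime (p:ℤ) := Nat.prime_iff_prime_int.mp hp
  have hn0 : p^v ≠ 0 := pow_ne_zero _ hp.pos.ne'
  have hpn : (p:ℤ) ∣ ((p^v:ℕ):ℤ) := by push_cast; exact dvd_pow_self _ hv
  have hps : ¬ (p:ℤ) ∣ s := not_dvd_of_isCoprime hp hv hs
  have hpt : ¬ (p:ℤ) ∣ t := not_dvd_of_isCoprime hp hv ht
  set n := p^v with hn
  have hnpos : (0:ℤ) < ((n:ℕ):ℤ) := by exact_mod_cast Nat.pos_of_ne_zero hn0
  have hdivr : (n / n : ℕ) = 1 := Nat.div_self (Nat.pos_of_ne_zero hn0)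
  have hdivq : (n / p^u : ℕ) = p^(v-u) := Nat.pow_div huv.le hp.pos
  set P : ℤ := ((p^(v-u) : ℕ):ℤ) with hP
  have hpP : (p:ℤ) ∣ P := by rw [hP]; push_cast; exact dvd_pow_self _ (by omega)
  have key3 : ∀ (a b : ℕ), ((b:ℤ) * t ≡ (a:ℤ)*s*P - c [ZMOD (n:ℕ)]) →
      ((p:ℤ) ∣ (b:ℤ) ↔ (p:ℤ) ∣ c) := by
    intro a b heq
    have h1 : ((a:ℤ)*s*P - c) ≡ -c [ZMOD (p:ℤ)] := by
      apply Int.modEq_iff_dvd.mpr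
      rw [show -c - ((a:ℤ)*s*P - c) = -((a:ℤ)*s*P) by ring]
      exact dvd_neg.mpr ((hpP.mul_left _))
    have hbt : (p:ℤ) ∣ (b:ℤ)*t ↔ (p:ℤ) ∣ (b:ℤ) := by
      rw [hpi.dvd_mul]; tauto
    rw [← hbt, int_dvd_iff_of_modeq heq hpn, int_dvd_iff_of_modeq h1 dvd_rfl, dvd_neg]
  rw [Ncnt, locN, if_neg (by omega : ¬ u = v)]
  simp only [hdivq, hdivr, Nat.cast_one, mul_one]
  by_cases hc : (p:ℤ) ∣ c
  · rw [if_pos hc, Finset.card_eq_zero.mpr]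
    apply Finset.filter_eq_empty_iff.mpr
    rintro ⟨a, b⟩ hab hcond
    obtain ⟨copa, copb, heq⟩ := hcond
    exact (coprime_pp_iff hp hv b).mp copb ((key3 a b (modeq_sub_iff'.mp heq)).mpr hc)
  · rw [if_neg hc]
    obtain ⟨f, g0, hfg⟩ := id ht
    set G : ℕ → ℕ := fun a => ((f * ((a:ℤ)*s*P - c)) % ((n:ℕ):ℤ)).toNat with hG
    have f1 : ∀ a : ℕ, ((G a : ℕ) : ℤ) = (f * ((a:ℤ)*s*P - c)) % ((n:ℕ):ℤ) :=
      fun a => Int.toNat_of_nonneg (Int.emod_nonneg _ hnpos.ne')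
    have f2 : ∀ a : ℕ, G a < n := by
      intro a
      have h1 := Int.emod_lt_of_pos (f * ((a:ℤ)*s*P - c)) hnpos
      have h2 := f1 a
      omega
    have f3 : ∀ a : ℕ, ((G a : ℕ):ℤ) * t ≡ (a:ℤ)*s*P - c [ZMOD (n:ℕ)] := by
      intro a
      apply Int.modEq_iff_dvd.mpr
      have hGa : ((G a:ℕ):ℤ) = f * ((a:ℤ)*s*P - c)
          - ((n:ℕ):ℤ) * ((f * ((a:ℤ)*s*P - c))/((n:ℕ):ℤ)) := by
        rw [f1]; exact Int.emod_def _ _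
      refine ⟨((a:ℤ)*s*P - c)*g0 + ((f * ((a:ℤ)*s*P - c))/((n:ℕ):ℤ))*t, ?_⟩
      rw [hGa]
      linear_combination ((a:ℤ)*s*P - c) * hfg.symm
    have huniq : ∀ a b : ℕ, b < n → ((b:ℤ) * t ≡ (a:ℤ)*s*P - c [ZMOD (n:ℕ)]) → b = G a := by
      intro a b hb heq
      exact nat_eq_of_modeq hb (f2 a) (modeq_cancel ht (heq.trans (f3 a).symm))
    refine (Finset.card_nbij'
        (t := (range (p^u)).filter (fun a : ℕ => Nat.Coprime a (p^u)))
        (fun ab => ab.1) (fun a => (a, G a)) ?_ ?_ ?_ ?_).trans ?_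
    · rintro ⟨a, b⟩ hab
      simp only [Finset.mem_coe, mem_filter, mem_product, mem_range] at hab ⊢
      exact ⟨hab.1.1, hab.2.1⟩
    · intro a ha
      simp only [Finset.mem_coe, mem_filter, mem_range] at ha
      simp only [Finset.mem_coe, mem_filter, mem_product, mem_range]
      refine ⟨⟨ha.1, f2 a⟩, ha.2, ?_, modeq_sub_iff'.mpr (f3 a)⟩
      exact (coprime_pp_iff hp hv (G a)).mpr
        (fun hdv => hc ((key3 a (G a) (f3 a)).mp hdv))
    · rintro ⟨a, b⟩ hab
      simp only [Finset.mem_coe, mem_filter, mem_product, mem_range] at hab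
      have := huniq a b hab.1.2 (modeq_sub_iff'.mp hab.2.2.2)
      simp [this.symm]
    · intro a _; rfl
    · rw [show min u v = u from min_eq_left huv.le, Nat.totient_eq_card_coprime]
      apply congrArg
      apply Finset.filter_congr
      intro a _
      exact ⟨fun h => Nat.coprime_comm.mp h, fun h => Nat.coprime_comm.mp h⟩

lemma lcm_mul_lcm_of_coprime {a b x y : ℕ} (h : Nat.Coprime (Nat.lcm a b) (Nat.lcm x y)) :
    Nat.lcm (a*x) (b*y) = Nat.lcm a b * Nat.lcm x y := by
  apply Nat.dvd_antisymm
  · apply Nat.lcm_dvd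
    · exact mul_dvd_mul (Nat.dvd_lcm_left a b) (Nat.dvd_lcm_left x y)
    · exact mul_dvd_mul (Nat.dvd_lcm_right a b) (Nat.dvd_lcm_right x y)
  · apply Nat.Coprime.mul_dvd_of_dvd_of_dvd h
    · exact Nat.lcm_dvd ((dvd_mul_right a x).trans (Nat.dvd_lcm_left _ _))
        ((dvd_mul_right b y).trans (Nat.dvd_lcm_right _ _))
    · exact Nat.lcm_dvd ((dvd_mul_left x a).trans (Nat.dvd_lcm_left _ _))
        ((dvd_mul_left y b).trans (Nat.dvd_lcm_right _ _))

lemma Ncnt_mul {q₁ r₁ q₂ r₂ : ℕ} (hq₁ : q₁ ≠ 0) (hr₁ : r₁ ≠ 0) (hq₂ : q₂ ≠ 0) (hr₂ : r₂ ≠ 0)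
    (s t c : ℤ) (hco : Nat.Coprime (Nat.lcm q₁ r₁) (Nat.lcm q₂ r₂)) :
    Ncnt (q₁*q₂) (r₁*r₂) (Nat.lcm q₁ r₁ * Nat.lcm q₂ r₂) s t c
      = Ncnt q₁ r₁ (Nat.lcm q₁ r₁)
          (s * ((Nat.lcm q₂ r₂ / q₂ : ℕ) : ℤ)) (t * ((Nat.lcm q₂ r₂ / r₂ : ℕ) : ℤ)) c
      * Ncnt q₂ r₂ (Nat.lcm q₂ r₂)
          (s * ((Nat.lcm q₁ r₁ / q₁ : ℕ) : ℤ)) (t * ((Nat.lcm q₁ r₁ / r₁ : ℕ) : ℤ)) c := by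
  set L₁ := Nat.lcm q₁ r₁ with hL₁
  set L₂ := Nat.lcm q₂ r₂ with hL₂
  have hq12 : Nat.Coprime q₁ q₂ :=
    Nat.Coprime.coprime_dvd_left (Nat.dvd_lcm_left _ _)
      (Nat.Coprime.coprime_dvd_right (Nat.dvd_lcm_left _ _) hco)
  have hr12 : Nat.Coprime r₁ r₂ :=
    Nat.Coprime.coprime_dvd_left (Nat.dvd_lcm_right _ _)
      (Nat.Coprime.coprime_dvd_right (Nat.dvd_lcm_right _ _) hco)
  have hQ0 : q₁ * q₂ ≠ 0 := by positivity
  have hR0 : r₁ * r₂ ≠ 0 := by positivity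
  have hdQ : ((L₁*L₂) / (q₁*q₂) : ℕ) = (L₁/q₁) * (L₂/q₂) :=
    (Nat.div_mul_div_comm (Nat.dvd_lcm_left q₁ r₁) (Nat.dvd_lcm_left q₂ r₂)).symm
  have hdR : ((L₁*L₂) / (r₁*r₂) : ℕ) = (L₁/r₁) * (L₂/r₂) :=
    (Nat.div_mul_div_comm (Nat.dvd_lcm_right q₁ r₁) (Nat.dvd_lcm_right q₂ r₂)).symm
  have hcond : ∀ a b : ℕ,
      (((a:ℤ) * s * (((L₁*L₂) / (q₁*q₂) : ℕ) : ℤ)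
          - (b:ℤ) * t * (((L₁*L₂) / (r₁*r₂) : ℕ):ℤ)) ≡ c [ZMOD ((L₁*L₂ : ℕ):ℤ)])
      ↔ ((((a % q₁ : ℕ):ℤ) * (s * ((L₂/q₂ : ℕ):ℤ)) * ((L₁/q₁ : ℕ):ℤ)
          - ((b % r₁ :ℕ):ℤ) * (t * ((L₂/r₂:ℕ):ℤ)) * ((L₁/r₁:ℕ):ℤ)) ≡ c [ZMOD (L₁:ℕ)])
        ∧ ((((a % q₂ : ℕ):ℤ) * (s * ((L₁/q₁ : ℕ):ℤ)) * ((L₂/q₂ : ℕ):ℤ)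
          - ((b % r₂ :ℕ):ℤ) * (t * ((L₁/r₁:ℕ):ℤ)) * ((L₂/r₂:ℕ):ℤ)) ≡ c [ZMOD (L₂:ℕ)]) := by
    intro a b
    rw [show ((L₁*L₂ : ℕ):ℤ) = ((L₁:ℕ):ℤ) * ((L₂:ℕ):ℤ) by push_cast; ring,
      ← Int.modEq_and_modEq_iff_modEq_mul (by simpa using hco)]
    apply and_congr
    · have e1 : ((a:ℤ) * s * (((L₁*L₂) / (q₁*q₂) : ℕ) : ℤ)
          - (b:ℤ) * t * (((L₁*L₂) / (r₁*r₂) : ℕ):ℤ))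
          = ((a:ℤ) * ((L₁/q₁:ℕ):ℤ)) * (s * ((L₂/q₂:ℕ):ℤ))
            - ((b:ℤ) * ((L₁/r₁:ℕ):ℤ)) * (t * ((L₂/r₂:ℕ):ℤ)) := by
        rw [hdQ, hdR]; push_cast; ring
      have e2 : (((a % q₁ : ℕ):ℤ) * (s * ((L₂/q₂ : ℕ):ℤ)) * ((L₁/q₁ : ℕ):ℤ)
          - ((b % r₁ :ℕ):ℤ) * (t * ((L₂/r₂:ℕ):ℤ)) * ((L₁/r₁:ℕ):ℤ))
          = (((a % q₁:ℕ):ℤ) * ((L₁/q₁:ℕ):ℤ)) * (s * ((L₂/q₂:ℕ):ℤ))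
            - (((b % r₁:ℕ):ℤ) * ((L₁/r₁:ℕ):ℤ)) * (t * ((L₂/r₂:ℕ):ℤ)) := by ring
      have hmod : ((a:ℤ) * s * (((L₁*L₂) / (q₁*q₂) : ℕ) : ℤ)
          - (b:ℤ) * t * (((L₁*L₂) / (r₁*r₂) : ℕ):ℤ))
          ≡ (((a % q₁ : ℕ):ℤ) * (s * ((L₂/q₂ : ℕ):ℤ)) * ((L₁/q₁ : ℕ):ℤ)
          - ((b % r₁ :ℕ):ℤ) * (t * ((L₂/r₂:ℕ):ℤ)) * ((L₁/r₁:ℕ):ℤ)) [ZMOD (L₁:ℕ)] := by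
        rw [e1, e2]
        exact Int.ModEq.sub
          (((modeq_mod_mul_div (Nat.dvd_lcm_left q₁ r₁) a).symm).mul_right _)
          (((modeq_mod_mul_div (Nat.dvd_lcm_right q₁ r₁) b).symm).mul_right _)
      exact ⟨fun h => hmod.symm.trans h, fun h => hmod.trans h⟩
    · have e1 : ((a:ℤ) * s * (((L₁*L₂) / (q₁*q₂) : ℕ) : ℤ)
          - (b:ℤ) * t * (((L₁*L₂) / (r₁*r₂) : ℕ):ℤ))
          = ((a:ℤ) * ((L₂/q₂:ℕ):ℤ)) * (s * ((L₁/q₁:ℕ):ℤ))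
            - ((b:ℤ) * ((L₂/r₂:ℕ):ℤ)) * (t * ((L₁/r₁:ℕ):ℤ)) := by
        rw [hdQ, hdR]; push_cast; ring
      have e2 : (((a % q₂ : ℕ):ℤ) * (s * ((L₁/q₁ : ℕ):ℤ)) * ((L₂/q₂ : ℕ):ℤ)
          - ((b % r₂ :ℕ):ℤ) * (t * ((L₁/r₁:ℕ):ℤ)) * ((L₂/r₂:ℕ):ℤ))
          = (((a % q₂:ℕ):ℤ) * ((L₂/q₂:ℕ):ℤ)) * (s * ((L₁/q₁:ℕ):ℤ))
            - (((b % r₂:ℕ):ℤ) * ((L₂/r₂:ℕ):ℤ)) * (t * ((L₁/r₁:ℕ):ℤ)) := by ring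
      have hmod : ((a:ℤ) * s * (((L₁*L₂) / (q₁*q₂) : ℕ) : ℤ)
          - (b:ℤ) * t * (((L₁*L₂) / (r₁*r₂) : ℕ):ℤ))
          ≡ (((a % q₂ : ℕ):ℤ) * (s * ((L₁/q₁ : ℕ):ℤ)) * ((L₂/q₂ : ℕ):ℤ)
          - ((b % r₂ :ℕ):ℤ) * (t * ((L₁/r₁:ℕ):ℤ)) * ((L₂/r₂:ℕ):ℤ)) [ZMOD (L₂:ℕ)] := by
        rw [e1, e2]
        exact Int.ModEq.sub
          (((modeq_mod_mul_div (Nat.dvd_lcm_left q₂ r₂) a).symm).mul_right _)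
          (((modeq_mod_mul_div (Nat.dvd_lcm_right q₂ r₂) b).symm).mul_right _)
      exact ⟨fun h => hmod.symm.trans h, fun h => hmod.trans h⟩
  have hcop : ∀ a : ℕ, ∀ m₁ m₂ : ℕ, (Nat.Coprime a (m₁ * m₂)
      ↔ Nat.Coprime (a % m₁) m₁ ∧ Nat.Coprime (a % m₂) m₂) := by
    intro a m₁ m₂
    rw [Nat.coprime_mul_iff_right, coprime_mod_iff, coprime_mod_iff]
  have crtQ : ∀ (m₁ m₂ : ℕ) (hm : m₁.Coprime m₂), m₁ ≠ 0 → m₂ ≠ 0 → ∀ a₁ a₂ : ℕ, a₁ < m₁ → a₂ < m₂ →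
      (((Nat.chineseRemainder hm a₁ a₂ : ℕ) % (m₁*m₂)) % m₁ = a₁
        ∧ ((Nat.chineseRemainder hm a₁ a₂ : ℕ) % (m₁*m₂)) % m₂ = a₂) := by
    intro m₁ m₂ hm hm₁ hm₂ a₁ a₂ h1 h2
    obtain ⟨hk1, hk2⟩ := (Nat.chineseRemainder hm a₁ a₂).2
    have hk1' : (Nat.chineseRemainder hm a₁ a₂ : ℕ) % m₁ = a₁ % m₁ := hk1
    have hk2' : (Nat.chineseRemainder hm a₁ a₂ : ℕ) % m₂ = a₂ % m₂ := hk2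
    constructor
    · exact (Nat.mod_mod_of_dvd _ (dvd_mul_right m₁ m₂)).trans (hk1'.trans (Nat.mod_eq_of_lt h1))
    · exact (Nat.mod_mod_of_dvd _ (dvd_mul_left m₂ m₁)).trans (hk2'.trans (Nat.mod_eq_of_lt h2))
  have uniq : ∀ (m₁ m₂ : ℕ), m₁.Coprime m₂ → ∀ a a' : ℕ, a < m₁*m₂ → a' < m₁*m₂ →
      a % m₁ = a' % m₁ → a % m₂ = a' % m₂ → a = a' := by
    intro m₁ m₂ hm a a' ha ha' h1 h2
    have : a ≡ a' [MOD m₁*m₂] := (Nat.modEq_and_modEq_iff_modEq_mul hm).1 ⟨h1, h2⟩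
    rwa [Nat.ModEq, Nat.mod_eq_of_lt ha, Nat.mod_eq_of_lt ha'] at this
  rw [Ncnt, Ncnt, Ncnt, ← Finset.card_product]
  apply Finset.card_nbij'
    (i := fun ab => ((ab.1 % q₁, ab.2 % r₁), (ab.1 % q₂, ab.2 % r₂)))
    (j := fun x => (((Nat.chineseRemainder hq12 x.1.1 x.2.1 : ℕ) % (q₁*q₂)),
                    ((Nat.chineseRemainder hr12 x.1.2 x.2.2 : ℕ) % (r₁*r₂))))
  · rintro ⟨a, b⟩ hab
    simp only [Finset.mem_coe, mem_filter, mem_product, mem_range] at hab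
    obtain ⟨⟨ha, hb⟩, copa, copb, heq⟩ := hab
    obtain ⟨h1, h2⟩ := (hcond a b).mp heq
    obtain ⟨ca1, ca2⟩ := (hcop a q₁ q₂).mp copa
    obtain ⟨cb1, cb2⟩ := (hcop b r₁ r₂).mp copb
    simp only [Finset.mem_coe, mem_product, mem_filter, mem_range]
    exact ⟨⟨⟨Nat.mod_lt _ (Nat.pos_of_ne_zero hq₁), Nat.mod_lt _ (Nat.pos_of_ne_zero hr₁)⟩,
      ca1, cb1, h1⟩,
      ⟨⟨Nat.mod_lt _ (Nat.pos_of_ne_zero hq₂), Nat.mod_lt _ (Nat.pos_of_ne_zero hr₂)⟩,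
      ca2, cb2, h2⟩⟩
  · rintro ⟨⟨a₁, b₁⟩, ⟨a₂, b₂⟩⟩ hx
    simp only [Finset.mem_coe, mem_product, mem_filter, mem_range] at hx
    obtain ⟨⟨⟨ha₁, hb₁⟩, ca1, cb1, h1⟩, ⟨⟨ha₂, hb₂⟩, ca2, cb2, h2⟩⟩ := hx
    obtain ⟨hA1, hA2⟩ := crtQ q₁ q₂ hq12 hq₁ hq₂ a₁ a₂ ha₁ ha₂
    obtain ⟨hB1, hB2⟩ := crtQ r₁ r₂ hr12 hr₁ hr₂ b₁ b₂ hb₁ hb₂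
    simp only [Finset.mem_coe, mem_filter, mem_product, mem_range]
    refine ⟨⟨Nat.mod_lt _ (Nat.pos_of_ne_zero hQ0), Nat.mod_lt _ (Nat.pos_of_ne_zero hR0)⟩,
      ?_, ?_, ?_⟩
    · exact (hcop _ q₁ q₂).mpr (by rw [hA1, hA2]; exact ⟨ca1, ca2⟩)
    · exact (hcop _ r₁ r₂).mpr (by rw [hB1, hB2]; exact ⟨cb1, cb2⟩)
    · exact (hcond _ _).mpr (by rw [hA1, hA2, hB1, hB2]; exact ⟨h1, h2⟩)
  · rintro ⟨a, b⟩ hab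
    simp only [Finset.mem_coe, mem_filter, mem_product, mem_range] at hab
    obtain ⟨⟨ha, hb⟩, _⟩ := hab
    obtain ⟨hA1, hA2⟩ := crtQ q₁ q₂ hq12 hq₁ hq₂ (a % q₁) (a % q₂)
      (Nat.mod_lt _ (Nat.pos_of_ne_zero hq₁)) (Nat.mod_lt _ (Nat.pos_of_ne_zero hq₂))
    obtain ⟨hB1, hB2⟩ := crtQ r₁ r₂ hr12 hr₁ hr₂ (b % r₁) (b % r₂)
      (Nat.mod_lt _ (Nat.pos_of_ne_zero hr₁)) (Nat.mod_lt _ (Nat.pos_of_ne_zero hr₂))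
    have e1 := uniq q₁ q₂ hq12 _ a (Nat.mod_lt _ (Nat.pos_of_ne_zero hQ0)) ha
      (by rw [hA1]) (by rw [hA2])
    have e2 := uniq r₁ r₂ hr12 _ b (Nat.mod_lt _ (Nat.pos_of_ne_zero hR0)) hb
      (by rw [hB1]) (by rw [hB2])
    simp only [Prod.mk.injEq]
    exact ⟨e1, e2⟩
  · rintro ⟨⟨a₁, b₁⟩, ⟨a₂, b₂⟩⟩ hx
    simp only [Finset.mem_coe, mem_product, mem_filter, mem_range] at hx
    obtain ⟨⟨⟨ha₁, hb₁⟩, -⟩, ⟨⟨ha₂, hb₂⟩, -⟩⟩ := hx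
    obtain ⟨hA1, hA2⟩ := crtQ q₁ q₂ hq12 hq₁ hq₂ a₁ a₂ ha₁ ha₂
    obtain ⟨hB1, hB2⟩ := crtQ r₁ r₂ hr12 hr₁ hr₂ b₁ b₂ hb₁ hb₂
    simp only [Prod.mk.injEq]
    exact ⟨⟨hA1, hB1⟩, ⟨hA2, hB2⟩⟩

lemma lcm_pow_pow (p u v : ℕ) : Nat.lcm (p^u) (p^v) = p^(max u v) := by
  rcases le_total u v with h|h
  · rw [max_eq_right h]
    exact Nat.dvd_antisymm (Nat.lcm_dvd (pow_dvd_pow p h) dvd_rfl) (Nat.dvd_lcm_right _ _)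
  · rw [max_eq_left h]
    exact Nat.dvd_antisymm (Nat.lcm_dvd dvd_rfl (pow_dvd_pow p h)) (Nat.dvd_lcm_left _ _)

lemma Ncnt_eq_prod (c : ℤ) : ∀ (L : ℕ), ∀ (q r : ℕ), q ≠ 0 → r ≠ 0 → Nat.lcm q r = L →
    ∀ s t : ℤ, IsCoprime s ((L:ℕ):ℤ) → IsCoprime t ((L:ℕ):ℤ) →
    Ncnt q r L s t c
      = ∏ p ∈ L.primeFactors, locN p (q.factorization p) (r.factorization p) c := by
  intro L
  induction L using Nat.strong_induction_on with
  | _ L ih =>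
  intro q r hq hr hL s t hs ht
  by_cases hempty : L.primeFactors = ∅
  · have hL0 : L ≠ 0 := hL ▸ Nat.lcm_ne_zero hq hr
    have hL1 : L = 1 := by
      rcases Nat.primeFactors_eq_empty.mp hempty with h | h
      · exact absurd h hL0
      · exact h
    have hq1 : q = 1 := Nat.dvd_one.mp (hL1 ▸ hL ▸ Nat.dvd_lcm_left q r)
    have hr1 : r = 1 := Nat.dvd_one.mp (hL1 ▸ hL ▸ Nat.dvd_lcm_right q r)
    subst hq1 hr1 hL1
    rw [hempty, Finset.prod_empty, Ncnt]
    simp [Int.modEq_one]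
  · obtain ⟨p, hpmem⟩ := Finset.nonempty_iff_ne_empty.mpr hempty
    obtain ⟨hp, hpL, hL0⟩ := Nat.mem_primeFactors.mp hpmem
    set u := q.factorization p with hu
    set v := r.factorization p with hv
    set q₂ := q / p^u with hq₂def
    set r₂ := r / p^v with hr₂def
    have hq2 : q = p^u * q₂ := (Nat.ordProj_mul_ordCompl_eq_self q p).symm
    have hr2 : r = p^v * r₂ := (Nat.ordProj_mul_ordCompl_eq_self r p).symm
    have hq₂0 : q₂ ≠ 0 := (Nat.ordCompl_pos p hq).ne'
    have hr₂0 : r₂ ≠ 0 := (Nat.ordCompl_pos p hr).ne'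
    have hpq₂ : ¬ p ∣ q₂ := Nat.not_dvd_ordCompl hp hq
    have hpr₂ : ¬ p ∣ r₂ := Nat.not_dvd_ordCompl hp hr
    set L₂ := Nat.lcm q₂ r₂ with hL₂def
    have hL₂0 : L₂ ≠ 0 := Nat.lcm_ne_zero hq₂0 hr₂0
    have hpL₂ : ¬ p ∣ L₂ := by
      intro h
      rcases hp.dvd_mul.mp (h.trans (Nat.lcm_dvd_mul q₂ r₂)) with h'|h'
      · exact hpq₂ h'
      · exact hpr₂ h'
    set w := max u v with hwdef
    have hlcmpp : Nat.lcm (p^u) (p^v) = p^w := lcm_pow_pow p u v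
    have hcop : Nat.Coprime (Nat.lcm (p^u) (p^v)) L₂ := by
      rw [hlcmpp]
      exact Nat.Coprime.pow_left _ (hp.coprime_iff_not_dvd.mpr hpL₂)
    have hwfact : L.factorization p = w := by
      rw [← hL, Nat.factorization_lcm hq hr, Finsupp.sup_apply]
    have hw1 : w ≠ 0 := by
      have := hp.factorization_pos_of_dvd hL0 hpL
      omega
    have hppw : (p:ℕ)^w ≠ 0 := pow_ne_zero _ hp.pos.ne'
    have hLsplit : L = p^w * L₂ := by
      rw [← hL]
      conv_lhs => rw [hq2, hr2]
      rw [lcm_mul_lcm_of_coprime hcop, hlcmpp]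
    have hL₂lt : L₂ < L := by
      have h1 : 1 < p^w := Nat.one_lt_pow hw1 hp.one_lt
      have h2 := Nat.pos_of_ne_zero hL₂0
      rw [hLsplit]; nlinarith
    have hpwdvdL : ((p^w : ℕ):ℤ) ∣ ((L:ℕ):ℤ) := Int.natCast_dvd_natCast.mpr ⟨L₂, hLsplit⟩
    have hL₂dvdL : ((L₂ : ℕ):ℤ) ∣ ((L:ℕ):ℤ) := Int.natCast_dvd_natCast.mpr ⟨p^w, by rw [hLsplit]; ring⟩
    have hsw : IsCoprime s ((p^w : ℕ):ℤ) := hs.of_isCoprime_of_dvd_right hpwdvdL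
    have htw : IsCoprime t ((p^w : ℕ):ℤ) := ht.of_isCoprime_of_dvd_right hpwdvdL
    have hsL₂ : IsCoprime s ((L₂:ℕ):ℤ) := hs.of_isCoprime_of_dvd_right hL₂dvdL
    have htL₂ : IsCoprime t ((L₂:ℕ):ℤ) := ht.of_isCoprime_of_dvd_right hL₂dvdL
    have hcopw : Nat.Coprime (p^w) L₂ := hlcmpp ▸ hcop
    have hdiv1 : (L₂ / q₂ : ℕ) ∣ L₂ := ⟨q₂, (Nat.div_mul_cancel (Nat.dvd_lcm_left q₂ r₂)).symm⟩
    have hdiv2 : (L₂ / r₂ : ℕ) ∣ L₂ := ⟨r₂, (Nat.div_mul_cancel (Nat.dvd_lcm_right q₂ r₂)).symm⟩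
    have hdiv3 : (p^w / p^u : ℕ) ∣ p^w := ⟨p^u, (Nat.div_mul_cancel (pow_dvd_pow p (le_max_left u v))).symm⟩
    have hdiv4 : (p^w / p^v : ℕ) ∣ p^w := ⟨p^v, (Nat.div_mul_cancel (pow_dvd_pow p (le_max_right u v))).symm⟩
    have hco1 : IsCoprime ((L₂/q₂ : ℕ):ℤ) ((p^w : ℕ):ℤ) :=
      Nat.isCoprime_iff_coprime.mpr (Nat.Coprime.coprime_dvd_left hdiv1 hcopw.symm)
    have hco2 : IsCoprime ((L₂/r₂ : ℕ):ℤ) ((p^w : ℕ):ℤ) :=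
      Nat.isCoprime_iff_coprime.mpr (Nat.Coprime.coprime_dvd_left hdiv2 hcopw.symm)
    have hco3 : IsCoprime ((p^w/p^u : ℕ):ℤ) ((L₂ : ℕ):ℤ) :=
      Nat.isCoprime_iff_coprime.mpr (Nat.Coprime.coprime_dvd_left hdiv3 hcopw)
    have hco4 : IsCoprime ((p^w/p^v : ℕ):ℤ) ((L₂ : ℕ):ℤ) :=
      Nat.isCoprime_iff_coprime.mpr (Nat.Coprime.coprime_dvd_left hdiv4 hcopw)
    have hs1 : IsCoprime (s * ((L₂/q₂:ℕ):ℤ)) ((p^w:ℕ):ℤ) := IsCoprime.mul_left hsw hco1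
    have ht1 : IsCoprime (t * ((L₂/r₂:ℕ):ℤ)) ((p^w:ℕ):ℤ) := IsCoprime.mul_left htw hco2
    have hs2 : IsCoprime (s * ((p^w/p^u:ℕ):ℤ)) ((L₂:ℕ):ℤ) := IsCoprime.mul_left hsL₂ hco3
    have ht2 : IsCoprime (t * ((p^w/p^v:ℕ):ℤ)) ((L₂:ℕ):ℤ) := IsCoprime.mul_left htL₂ hco4
    have hmul := Ncnt_mul (pow_ne_zero u hp.pos.ne') (pow_ne_zero v hp.pos.ne') hq₂0 hr₂0 s t c hcop
    rw [hlcmpp] at hmul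
    rw [← hq2, ← hr2, ← hLsplit] at hmul
    rw [hmul]
    have hfactors : L.primeFactors = insert p (L₂.primeFactors) := by
      rw [hLsplit, Nat.primeFactors_mul hppw hL₂0, Nat.primeFactors_prime_pow hw1 hp,
        ← Finset.insert_eq]
    have hpnot : p ∉ L₂.primeFactors := fun hmem => hpL₂ (Nat.mem_primeFactors.mp hmem).2.1
    rw [hfactors, Finset.prod_insert hpnot]
    congr 1
    · show Ncnt (p ^ u) (p ^ v) (p ^ w) (s * ((L₂ / q₂ : ℕ) : ℤ)) (t * ((L₂ / r₂ : ℕ) : ℤ)) c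
          = locN p u v c
      rcases Nat.lt_trichotomy u v with h|h|h
      · have hwv : w = v := max_eq_right h.le
        rw [hwv] at hs1 ht1 ⊢
        exact Ncnt_pp_gt hp h _ _ c hs1 ht1
      · have hwv : w = u := by rw [hwdef, h, max_self]
        rw [hwv] at hs1 ht1 ⊢
        rw [← h]
        exact Ncnt_pp_eq hp (by omega : u ≠ 0) _ _ c hs1 ht1
      · have hwv : w = u := max_eq_left h.le
        rw [hwv] at hs1 ht1 ⊢
        exact Ncnt_pp_lt hp h _ _ c hs1 ht1
    · show Ncnt q₂ r₂ L₂ (s * ((p ^ w / p ^ u : ℕ) : ℤ)) (t * ((p ^ w / p ^ v : ℕ) : ℤ)) c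
          = ∏ p' ∈ L₂.primeFactors, locN p' (q.factorization p') (r.factorization p') c
      rw [ih L₂ hL₂lt q₂ r₂ hq₂0 hr₂0 rfl _ _ hs2 ht2]
      apply Finset.prod_congr rfl
      intro p' hp'
      have hne : p' ≠ p := fun h => hpL₂ (h ▸ (Nat.mem_primeFactors.mp hp').2.1)
      have hfq : q.factorization p' = q₂.factorization p' := by
        conv_lhs => rw [hq2]
        rw [Nat.factorization_mul (pow_ne_zero u hp.pos.ne') hq₂0]
        simp [hp.factorization_pow, Finsupp.single_apply, (Ne.symm hne)]
      have hfr : r.factorization p' = r₂.factorization p' := by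
        conv_lhs => rw [hr2]
        rw [Nat.factorization_mul (pow_ne_zero v hp.pos.ne') hr₂0]
        simp [hp.factorization_pow, Finsupp.single_apply, (Ne.symm hne)]
      rw [hfq, hfr]

lemma lcm_div_left' {q r : ℕ} (hq : q ≠ 0) : Nat.lcm q r / q = r / Nat.gcd q r := by
  have hg : Nat.gcd q r ≠ 0 := fun h => hq (Nat.eq_zero_of_gcd_eq_zero_left h)
  have h1 : q * (r / Nat.gcd q r) = Nat.lcm q r := by
    apply Nat.eq_of_mul_eq_mul_left (Nat.pos_of_ne_zero hg)
    rw [← mul_assoc, mul_comm (Nat.gcd q r) q, mul_assoc,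
      Nat.mul_div_cancel' (Nat.gcd_dvd_right q r), Nat.gcd_mul_lcm]
  rw [← h1, Nat.mul_div_cancel_left _ (Nat.pos_of_ne_zero hq)]

lemma lcm_div_right' {q r : ℕ} (hr : r ≠ 0) : Nat.lcm q r / r = q / Nat.gcd q r := by
  rw [Nat.lcm_comm, Nat.gcd_comm]
  exact lcm_div_left' hr

lemma start_count (q r : ℕ) (hq : q ≠ 0) (hr : r ≠ 0) (c : ℤ) :
    (((Finset.Icc 1 q) ×ˢ (Finset.Icc 1 r)).filter (fun ab : ℕ × ℕ =>
        Nat.gcd ab.1 q = 1 ∧ Nat.gcd ab.2 r = 1 ∧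
        ((ab.1 : ℤ) * ((r / Nat.gcd q r : ℕ) : ℤ)
          - (ab.2 : ℤ) * ((q / Nat.gcd q r : ℕ) : ℤ)) ≡ c [ZMOD (Nat.lcm q r)])).card
    = Ncnt q r (Nat.lcm q r) 1 1 c := by
  have hrg : (r / Nat.gcd q r : ℕ) = Nat.lcm q r / q := (lcm_div_left' hq).symm
  have hqg : (q / Nat.gcd q r : ℕ) = Nat.lcm q r / r := (lcm_div_right' hr).symm
  have hmod : ∀ a b : ℕ,
      (((a % q : ℕ) : ℤ) * ((Nat.lcm q r / q : ℕ) : ℤ)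
        - ((b % r : ℕ) : ℤ) * ((Nat.lcm q r / r : ℕ) : ℤ))
      ≡ ((a : ℤ) * ((Nat.lcm q r / q : ℕ) : ℤ)
        - (b : ℤ) * ((Nat.lcm q r / r : ℕ) : ℤ)) [ZMOD (Nat.lcm q r : ℕ)] :=
    fun a b => Int.ModEq.sub (modeq_mod_mul_div (Nat.dvd_lcm_left q r) a)
      (modeq_mod_mul_div (Nat.dvd_lcm_right q r) b)
  rw [Ncnt]
  simp only [hrg, hqg, mul_one]
  apply Finset.card_nbij' (i := fun ab => (ab.1 % q, ab.2 % r))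
    (j := fun ab => (if ab.1 = 0 then q else ab.1, if ab.2 = 0 then r else ab.2))
  · rintro ⟨a, b⟩ hab
    simp only [Finset.mem_coe, mem_filter, mem_product, Finset.mem_Icc] at hab
    obtain ⟨⟨ha, hb⟩, copa, copb, heq⟩ := hab
    simp only [Finset.mem_coe, mem_filter, mem_product, mem_range]
    refine ⟨⟨Nat.mod_lt _ (Nat.pos_of_ne_zero hq), Nat.mod_lt _ (Nat.pos_of_ne_zero hr)⟩,
      (coprime_mod_iff a q).mpr copa, (coprime_mod_iff b r).mpr copb, (hmod a b).trans heq⟩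
  · rintro ⟨a, b⟩ hab
    simp only [Finset.mem_coe, mem_filter, mem_product, mem_range] at hab
    obtain ⟨⟨ha, hb⟩, copa, copb, heq⟩ := hab
    have hja : (if a = 0 then q else a) % q = a := by
      split_ifs with h
      · rw [Nat.mod_self, h]
      · exact Nat.mod_eq_of_lt ha
    have hjb : (if b = 0 then r else b) % r = b := by
      split_ifs with h
      · rw [Nat.mod_self, h]
      · exact Nat.mod_eq_of_lt hb
    simp only [Finset.mem_coe, mem_filter, mem_product, Finset.mem_Icc]
    refine ⟨⟨?_, ?_⟩, ?_, ?_, ?_⟩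
    · constructor
      · split_ifs with h
        · exact Nat.one_le_iff_ne_zero.mpr hq
        · exact Nat.one_le_iff_ne_zero.mpr h
      · split_ifs with h
        · exact le_rfl
        · exact ha.le
    · constructor
      · split_ifs with h
        · exact Nat.one_le_iff_ne_zero.mpr hr
        · exact Nat.one_le_iff_ne_zero.mpr h
      · split_ifs with h
        · exact le_rfl
        · exact hb.le
    · have := (coprime_mod_iff (if a = 0 then q else a) q).symm
      rw [hja] at this
      exact this.mpr copa
    · have := (coprime_mod_iff (if b = 0 then r else b) r).symm
      rw [hjb] at this
      exact this.mpr copb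
    · have h2 := hmod (if a = 0 then q else a) (if b = 0 then r else b)
      rw [hja, hjb] at h2
      exact h2.symm.trans heq
  · rintro ⟨a, b⟩ hab
    simp only [Finset.mem_coe, mem_filter, mem_product, Finset.mem_Icc] at hab
    obtain ⟨⟨⟨ha1, ha2⟩, hb1, hb2⟩, -⟩ := hab
    simp only [Prod.mk.injEq]
    constructor
    · rcases eq_or_lt_of_le ha2 with h | h
      · rw [h, Nat.mod_self, if_pos rfl]
      · rw [Nat.mod_eq_of_lt h, if_neg (by omega)]
    · rcases eq_or_lt_of_le hb2 with h | h
      · rw [h, Nat.mod_self, if_pos rfl]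
      · rw [Nat.mod_eq_of_lt h, if_neg (by omega)]
  · rintro ⟨a, b⟩ hab
    simp only [Finset.mem_coe, mem_filter, mem_product, mem_range] at hab
    obtain ⟨⟨ha, hb⟩, -⟩ := hab
    simp only [Prod.mk.injEq]
    constructor
    · split_ifs with h
      · rw [Nat.mod_self, h]
      · exact Nat.mod_eq_of_lt ha
    · split_ifs with h
      · rw [Nat.mod_self, h]
      · exact Nat.mod_eq_of_lt hb

lemma factorization_prodPow {S : Finset ℕ} (hS : ∀ p ∈ S, p.Prime) (e : ℕ → ℕ) (p' : ℕ) :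
    (∏ p ∈ S, p ^ e p).factorization p' = if p' ∈ S then e p' else 0 := by
  rw [Nat.factorization_prod (fun p hp => pow_ne_zero _ (hS p hp).pos.ne')]
  rw [Finset.sum_apply']
  by_cases h : p' ∈ S
  · rw [if_pos h, Finset.sum_eq_single_of_mem p' h]
    · rw [(hS p' h).factorization_pow, Finsupp.single_eq_same]
    · intro i hi hne
      rw [(hS i hi).factorization_pow, Finsupp.single_apply, if_neg hne]
  · rw [if_neg h]
    apply Finset.sum_eq_zero
    intro i hi
    rw [(hS i hi).factorization_pow, Finsupp.single_apply, if_neg (fun (he : i = p') => h (he ▸ hi))]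

lemma primeFactors_prodPow {S : Finset ℕ} (hS : ∀ p ∈ S, p.Prime) (e : ℕ → ℕ) :
    (∏ p ∈ S, p ^ e p).primeFactors = S.filter (fun p => e p ≠ 0) := by
  ext p'
  rw [← Nat.support_factorization, Finsupp.mem_support_iff, factorization_prodPow hS e p',
    mem_filter]
  by_cases h : p' ∈ S <;> simp [h]

lemma totient_prodPow {S : Finset ℕ} (hS : ∀ p ∈ S, p.Prime) (e : ℕ → ℕ) :
    (∏ p ∈ S, p ^ e p).totient = ∏ p ∈ S, (p ^ e p).totient := by
  induction S using Finset.induction_on with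
  | empty => simp
  | @insert a s ha ih =>
    have hap : a.Prime := hS a (mem_insert_self a s)
    rw [Finset.prod_insert ha, Finset.prod_insert ha, Nat.totient_mul, ih]
    · intro p hp; exact hS p (mem_insert_of_mem hp)
    · apply Nat.Coprime.prod_right
      intro i hi
      exact Nat.Coprime.pow _ _
        ((Nat.coprime_primes hap (hS i (mem_insert_of_mem hi))).mpr
          (fun he => ha (he ▸ hi)))

theorem stmt13 (q r : ℕ) (hq : 0 < q) (hr : 0 < r) (hqr : q ≠ r) (c : ℤ) :
    ((((Finset.Icc 1 q) ×ˢ (Finset.Icc 1 r)).filter (fun ab : ℕ × ℕ =>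
        Nat.gcd ab.1 q = 1 ∧ Nat.gcd ab.2 r = 1 ∧
        ((ab.1 : ℤ) * ((r / Nat.gcd q r : ℕ) : ℤ)
          - (ab.2 : ℤ) * ((q / Nat.gcd q r : ℕ) : ℤ)) ≡ c [ZMOD (Nat.lcm q r)])).card : ℝ)
    = if Int.gcd c (maxPart q r) = 1 then
        (Nat.totient (minPart q r) : ℝ) * (equalPart q r : ℝ) *
          (∏ p ∈ (Int.gcd c (equalPart q r)).primeFactors, (1 - 1 / (p : ℝ))) *
          (∏ p ∈ (equalPart q r).primeFactors \ (Int.gcd c (equalPart q r)).primeFactors,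
            (1 - 2 / (p : ℝ)))
      else 0 := by
  have hq0 : q ≠ 0 := hq.ne'
  have hr0 : r ≠ 0 := hr.ne'
  rw [start_count q r hq0 hr0 c,
    Ncnt_eq_prod c (Nat.lcm q r) q r hq0 hr0 rfl 1 1 isCoprime_one_left isCoprime_one_left]
  set U := q.primeFactors ∪ r.primeFactors with hU
  have hprimesU : ∀ p ∈ U, p.Prime := by
    intro p hp
    rcases Finset.mem_union.mp hp with h|h
    exacts [(Nat.mem_primeFactors.mp h).1, (Nat.mem_primeFactors.mp h).1]
  have hprimesQ : ∀ p ∈ q.primeFactors, p.Prime := fun p hp => (Nat.mem_primeFactors.mp hp).1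
  have hUL : (Nat.lcm q r).primeFactors = U := by
    ext p
    simp only [Nat.mem_primeFactors, Finset.mem_union, hU]
    constructor
    · rintro ⟨hp, hd, -⟩
      rcases hp.dvd_mul.mp (hd.trans (Nat.lcm_dvd_mul q r)) with h|h
      · exact Or.inl ⟨hp, h, hq0⟩
      · exact Or.inr ⟨hp, h, hr0⟩
    · rintro (⟨hp, hd, -⟩|⟨hp, hd, -⟩)
      · exact ⟨hp, hd.trans (Nat.dvd_lcm_left q r), Nat.lcm_ne_zero hq0 hr0⟩
      · exact ⟨hp, hd.trans (Nat.dvd_lcm_right q r), Nat.lcm_ne_zero hq0 hr0⟩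
  rw [hUL]
  have hmaxP : maxPart q r = ∏ p ∈ U, p ^ (if ¬ q.factorization p = r.factorization p
      then max (q.factorization p) (r.factorization p) else 0) := by
    rw [maxPart]
    exact Finset.prod_congr rfl (fun p _ => by split_ifs with h <;> simp_all)
  have hminP : minPart q r = ∏ p ∈ U, p ^ (if ¬ q.factorization p = r.factorization p
      then min (q.factorization p) (r.factorization p) else 0) := by
    rw [minPart]
    exact Finset.prod_congr rfl (fun p _ => by split_ifs with h <;> simp_all)
  have heqP : equalPart q r = ∏ p ∈ q.primeFactors,
      p ^ (if q.factorization p = r.factorization p then q.factorization p else 0) := by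
    rw [equalPart]
    exact Finset.prod_congr rfl (fun p _ => by split_ifs with h <;> simp_all)
  have hfq0 : ∀ p ∈ q.primeFactors, q.factorization p ≠ 0 := fun p hp =>
    ((Nat.mem_primeFactors.mp hp).1.factorization_pos_of_dvd hq0
      (Nat.mem_primeFactors.mp hp).2.1).ne'
  have hfr0 : ∀ p ∈ r.primeFactors, r.factorization p ≠ 0 := fun p hp =>
    ((Nat.mem_primeFactors.mp hp).1.factorization_pos_of_dvd hr0
      (Nat.mem_primeFactors.mp hp).2.1).ne'
  have hEdetail : ∀ p ∈ U, q.factorization p = r.factorization p →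
      p ∈ q.primeFactors ∧ q.factorization p ≠ 0 := by
    intro p hp he
    rcases Finset.mem_union.mp hp with h|h
    · exact ⟨h, hfq0 p h⟩
    · have hq' : q.factorization p ≠ 0 := by rw [he]; exact hfr0 p h
      exact ⟨Nat.mem_primeFactors.mpr
        ⟨(Nat.mem_primeFactors.mp h).1, Nat.dvd_of_factorization_pos hq', hq0⟩, hq'⟩
  set E := U.filter (fun p => q.factorization p = r.factorization p) with hE
  set D := U.filter (fun p => ¬ q.factorization p = r.factorization p) with hD
  have hmaxpf : (maxPart q r).primeFactors = D := by
    rw [hmaxP, primeFactors_prodPow hprimesU, hD]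
    apply Finset.filter_congr
    intro p hp
    by_cases h : q.factorization p = r.factorization p
    · simp [h]
    · simp only [h, not_false_iff, if_true, ne_eq, Nat.max_eq_zero_iff, iff_true]
      omega
  have heqpf : (equalPart q r).primeFactors = E := by
    rw [heqP, primeFactors_prodPow hprimesQ]
    ext p
    rw [mem_filter, hE, mem_filter]
    constructor
    · rintro ⟨hpq, hcond⟩
      by_cases h : q.factorization p = r.factorization p
      · exact ⟨Finset.mem_union_left _ hpq, h⟩
      · rw [if_neg h] at hcond
        exact absurd rfl hcond
    · rintro ⟨hpU, h⟩
      obtain ⟨hpq, hne⟩ := hEdetail p hpU h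
      refine ⟨hpq, ?_⟩
      rw [if_pos h]
      exact hne
  have hmax0 : maxPart q r ≠ 0 := by
    rw [hmaxP]
    exact Finset.prod_ne_zero_iff.mpr (fun p hp => pow_ne_zero _ (hprimesU p hp).pos.ne')
  have heq0 : equalPart q r ≠ 0 := by
    rw [heqP]
    exact Finset.prod_ne_zero_iff.mpr (fun p hp => pow_ne_zero _ (hprimesQ p hp).pos.ne')
  have hgcdmax : Int.gcd c ((maxPart q r : ℕ) : ℤ) = Nat.gcd c.natAbs (maxPart q r) := by
    simp [Int.gcd]
  have hgcdeq : Int.gcd c ((equalPart q r : ℕ) : ℤ) = Nat.gcd c.natAbs (equalPart q r) := by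
    simp [Int.gcd]
  by_cases hgcd : Int.gcd c (maxPart q r) = 1
  · rw [if_pos hgcd]
    have hDnc : ∀ p ∈ D, ¬ (p:ℤ) ∣ c := by
      intro p hpD hdc
      have hpf : p ∈ (maxPart q r).primeFactors := by rw [hmaxpf]; exact hpD
      have hpp := (Nat.mem_primeFactors.mp hpf).1
      have h2 : p ∣ maxPart q r := (Nat.mem_primeFactors.mp hpf).2.1
      have h1 : p ∣ c.natAbs := Int.natCast_dvd.mp hdc
      have : p ∣ Int.gcd c (maxPart q r) := by
        rw [hgcdmax]
        exact Nat.dvd_gcd h1 h2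
      rw [hgcd] at this
      exact hpp.one_lt.ne' (Nat.dvd_one.mp this)
    have hP1 : (Int.gcd c (equalPart q r)).primeFactors
        = E.filter (fun p : ℕ => (p:ℤ) ∣ c) := by
      ext p
      rw [Nat.mem_primeFactors, mem_filter]
      constructor
      · rintro ⟨hpp, hdvd, -⟩
        rw [hgcdeq] at hdvd
        have h1 : p ∣ c.natAbs := hdvd.trans (Nat.gcd_dvd_left _ _)
        have h2 : p ∣ equalPart q r := hdvd.trans (Nat.gcd_dvd_right _ _)
        refine ⟨?_, Int.natCast_dvd.mpr h1⟩
        rw [← heqpf]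
        exact Nat.mem_primeFactors.mpr ⟨hpp, h2, heq0⟩
      · rintro ⟨hpE, hdc⟩
        have hpf : p ∈ (equalPart q r).primeFactors := by rw [heqpf]; exact hpE
        obtain ⟨hpp, h2, -⟩ := Nat.mem_primeFactors.mp hpf
        refine ⟨hpp, ?_, ?_⟩
        · rw [hgcdeq]
          exact Nat.dvd_gcd (Int.natCast_dvd.mp hdc) h2
        · intro h0
          exact heq0 (by exact_mod_cast (Int.gcd_eq_zero_iff.mp h0).2)
    have hP2 : (equalPart q r).primeFactors \ (Int.gcd c (equalPart q r)).primeFactors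
        = E.filter (fun p : ℕ => ¬ (p:ℤ) ∣ c) := by
      rw [heqpf, hP1]
      ext p
      simp only [mem_sdiff, mem_filter]
      tauto
    rw [hP2, hP1]
    have hmin : (minPart q r).totient
        = ∏ p ∈ D, (p ^ min (q.factorization p) (r.factorization p)).totient := by
      rw [hminP, totient_prodPow hprimesU,
        ← Finset.prod_filter_mul_prod_filter_not U
          (fun p => ¬ q.factorization p = r.factorization p)]
      have h2 : ∏ p ∈ U.filter (fun p => ¬¬ q.factorization p = r.factorization p),
          (p ^ (if ¬ q.factorization p = r.factorization p
            then min (q.factorization p) (r.factorization p) else 0)).totient = 1 := by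
        apply Finset.prod_eq_one
        intro p hp
        rw [mem_filter] at hp
        rw [if_neg hp.2, pow_zero, Nat.totient_one]
      rw [h2, mul_one, hD]
      apply Finset.prod_congr rfl
      intro p hp
      rw [mem_filter] at hp
      rw [if_pos hp.2]
    rw [Nat.cast_prod,
      ← Finset.prod_filter_mul_prod_filter_not U
        (fun p => q.factorization p = r.factorization p)
        (fun p => (locN p (q.factorization p) (r.factorization p) c : ℝ))]
    have hDpart : ∏ p ∈ U.filter (fun p => ¬ q.factorization p = r.factorization p),
        (locN p (q.factorization p) (r.factorization p) c : ℝ)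
        = ((minPart q r).totient : ℝ) := by
      rw [hmin, Nat.cast_prod]
      apply Finset.prod_congr rfl
      intro p hp
      rw [mem_filter] at hp
      rw [locN, if_neg hp.2, if_neg (hDnc p (by rw [hD, mem_filter]; exact hp))]
    have hEfacts : ∀ p ∈ E, p.Prime ∧ q.factorization p ≠ 0
        ∧ q.factorization p = r.factorization p := by
      intro p hp
      rw [hE, mem_filter] at hp
      exact ⟨hprimesU p hp.1, (hEdetail p hp.1 hp.2).2, hp.2⟩
    have hE1 : ∀ p ∈ E.filter (fun p : ℕ => (p:ℤ) ∣ c),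
        (locN p (q.factorization p) (r.factorization p) c : ℝ)
        = (p:ℝ) ^ (q.factorization p) * (1 - 1/(p:ℝ)) := by
      intro p hp
      rw [mem_filter] at hp
      obtain ⟨hpp, hu0, huv⟩ := hEfacts p hp.1
      rw [locN, if_pos huv, if_pos hp.2]
      have hp2 : (2:ℝ) ≤ (p:ℝ) := by exact_mod_cast hpp.two_le
      have hppos : (0:ℝ) < (p:ℝ) := by linarith
      have hpow : (p:ℝ) ^ (q.factorization p)
          = (p:ℝ) ^ (q.factorization p - 1) * (p:ℝ) := by
        rw [← pow_succ, Nat.sub_add_cancel (Nat.one_le_iff_ne_zero.mpr hu0)]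
      push_cast [Nat.cast_sub hpp.one_lt.le]
      rw [hpow]
      field_simp
    have hE2 : ∀ p ∈ E.filter (fun p : ℕ => ¬ (p:ℤ) ∣ c),
        (locN p (q.factorization p) (r.factorization p) c : ℝ)
        = (p:ℝ) ^ (q.factorization p) * (1 - 2/(p:ℝ)) := by
      intro p hp
      rw [mem_filter] at hp
      obtain ⟨hpp, hu0, huv⟩ := hEfacts p hp.1
      rw [locN, if_pos huv, if_neg hp.2]
      have hp2 : (2:ℝ) ≤ (p:ℝ) := by exact_mod_cast hpp.two_le
      have hppos : (0:ℝ) < (p:ℝ) := by linarith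
      have hpow : (p:ℝ) ^ (q.factorization p)
          = (p:ℝ) ^ (q.factorization p - 1) * (p:ℝ) := by
        rw [← pow_succ, Nat.sub_add_cancel (Nat.one_le_iff_ne_zero.mpr hu0)]
      push_cast [Nat.cast_sub hpp.two_le]
      rw [hpow]
      field_simp
    have hEq' : q.primeFactors.filter (fun p => q.factorization p = r.factorization p) = E := by
      rw [hE]
      ext p
      rw [mem_filter, mem_filter]
      constructor
      · rintro ⟨h1, h2⟩
        exact ⟨Finset.mem_union_left _ h1, h2⟩
      · rintro ⟨h1, h2⟩
        exact ⟨(hEdetail p h1 h2).1, h2⟩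
    have hlnat : equalPart q r = ∏ p ∈ E, p ^ (q.factorization p) := by
      rw [equalPart, ← hEq', Finset.prod_filter]
    have hl : (equalPart q r : ℝ)
        = (∏ p ∈ E.filter (fun p : ℕ => (p:ℤ) ∣ c), (p:ℝ)^(q.factorization p))
          * (∏ p ∈ E.filter (fun p : ℕ => ¬ (p:ℤ) ∣ c), (p:ℝ)^(q.factorization p)) := by
      rw [Finset.prod_filter_mul_prod_filter_not E (fun p : ℕ => (p:ℤ) ∣ c), hlnat]
      push_cast
      rfl
    rw [show (∏ p ∈ U.filter (fun p => q.factorization p = r.factorization p),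
          (locN p (q.factorization p) (r.factorization p) c : ℝ)) = ∏ p ∈ E,
          (locN p (q.factorization p) (r.factorization p) c : ℝ) from by rw [hE]]
    rw [← Finset.prod_filter_mul_prod_filter_not E (fun p : ℕ => (p:ℤ) ∣ c)
        (fun p => (locN p (q.factorization p) (r.factorization p) c : ℝ)),
      Finset.prod_congr rfl hE1, Finset.prod_congr rfl hE2,
      Finset.prod_mul_distrib, Finset.prod_mul_distrib, hDpart, hl]
    ring
  · rw [if_neg hgcd]
    have hgcd0 : Int.gcd c (maxPart q r) ≠ 0 := by
      intro h
      exact hmax0 (by exact_mod_cast (Int.gcd_eq_zero_iff.mp h).2)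
    obtain ⟨p₀, hp₀, hdvd⟩ := Nat.exists_prime_and_dvd hgcd
    rw [hgcdmax] at hdvd
    have h1 : p₀ ∣ c.natAbs := hdvd.trans (Nat.gcd_dvd_left _ _)
    have h2 : p₀ ∣ maxPart q r := hdvd.trans (Nat.gcd_dvd_right _ _)
    have hp₀D : p₀ ∈ D := by
      rw [← hmaxpf]
      exact Nat.mem_primeFactors.mpr ⟨hp₀, h2, hmax0⟩
    have hp₀U : p₀ ∈ U := by
      rw [hD] at hp₀D
      exact (mem_filter.mp hp₀D).1
    have hne : ¬ q.factorization p₀ = r.factorization p₀ := by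
      rw [hD] at hp₀D
      exact (mem_filter.mp hp₀D).2
    rw [Finset.prod_eq_zero hp₀U
      (show locN p₀ (q.factorization p₀) (r.factorization p₀) c = 0 from by
        rw [locN, if_neg hne, if_pos (Int.natCast_dvd.mpr h1)])]
    simp
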